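/- Let V=(Q,Δ,w) be a 1-VASS, p,q ∈ Q, and k ∈ ℕ. Every set P of p-q paths, each of length at most k, has a Pareto set P' of cardinality at most |Q| consisting of p-q paths each of length at most 2k (the paths in P' need not belong to P). -/

import Mathlib

namespace VASSPaper

/-- A 1-VASS (without tests): states `Q`, transition relation `delta`, integer weights `w`. -/
structure VASS (Q : Type) where
  delta : Q → Q → Prop
  w : Q → Q → ℤ

variable {Q : Type}

/-- A path is a nonempty sequence of states joined by transitions. -/
def IsPath (V : VASS Q) : List Q → Prop
  | [] => False
  | [_] => True
  | a :: b :: l => V.delta a b ∧ IsPath V (b :: l)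

/-- The weight of a path: the sum of the weights of its transitions. -/
def pathWeight (V : VASS Q) (π : List Q) : ℤ :=
  (List.zipWith V.w π π.tail).sum

/-- The counter value at position `i` of the run over `π` starting with counter `z`. -/
def counterAt (V : VASS Q) (z : ℕ) (π : List Q) (i : ℕ) : ℤ :=
  (z : ℤ) + pathWeight V (π.take (i + 1))

/-- `π` lifts to a run from counter value `z`: all counter values stay nonnegative. -/
def IsRun (V : VASS Q) (π : List Q) (z : ℕ) : Prop :=
  IsPath V π ∧ ∀ i, i < π.length → 0 ≤ counterAt V z π i

/-- `π` goes from configuration `c` to configuration `c'`. -/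
def RunFromTo (V : VASS Q) (π : List Q) (c c' : Q × ℕ) : Prop :=
  π.head? = some c.1 ∧ π.getLast? = some c'.1 ∧ (c'.2 : ℤ) = (c.2 : ℤ) + pathWeight V π

/-- `c'` is reachable from `c` (in a 1-VASS without tests every run is valid). -/
def Reaches (V : VASS Q) (c c' : Q × ℕ) : Prop :=
  ∃ π, IsRun V π c.2 ∧ RunFromTo V π c c'

/-- A configuration is unbounded if infinitely many configurations are reachable from it. -/
def Unbounded (V : VASS Q) (c : Q × ℕ) : Prop :=
  {c' | Reaches V c c'}.Infinite

/-- The minimum weight of a (possibly empty) prefix of `π`. -/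
def pmin (V : VASS Q) (π : List Q) : ℤ :=
  ((List.range (π.length + 1)).map fun i => pathWeight V (π.take i)).foldr min 0

/-- The maximum weight of a (possibly empty) suffix of `π`. -/
def smax (V : VASS Q) (π : List Q) : ℤ :=
  ((List.range (π.length + 1)).map fun i => pathWeight V (π.drop i)).foldr max 0

/-- A cycle on `q`: a path with at least one transition starting and ending at `q`. -/
def IsCycleOn (V : VASS Q) (π : List Q) (q : Q) : Prop :=
  IsPath V π ∧ 2 ≤ π.length ∧ π.head? = some q ∧ π.getLast? = some q

/-- A simple cycle on `q`. -/
def IsSimpleCycleOn (V : VASS Q) (π : List Q) (q : Q) : Prop :=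
  IsCycleOn V π q ∧ π.dropLast.Nodup

/-- `π` is dominated by `π'` (paths with the same first and last states). -/
def Dominated (V : VASS Q) (π π' : List Q) : Prop :=
  π.head? = π'.head? ∧ π.getLast? = π'.getLast? ∧
    pmin V π ≤ pmin V π' ∧ smax V π ≤ smax V π'

/-- `π` is a path from `p` to `q`. -/
def IsPQPath (V : VASS Q) (p q : Q) (π : List Q) : Prop :=
  IsPath V π ∧ π.head? = some p ∧ π.getLast? = some q

/-- `P'` is a Pareto set for `P`: every path of `P` is dominated by some path of `P'`. -/
def ParetoFor (V : VASS Q) (P' P : Set (List Q)) : Prop :=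
  ∀ π ∈ P, ∃ π' ∈ P', Dominated V π π'

/-- Concatenation of a `p`-`q` path and a `q`-`r` path, identifying the shared state. -/
def pathConcat (π π' : List Q) : List Q := π ++ π'.tail

/- ===== auxiliary lemmas ===== -/

section FoldrHelpers

lemma foldr_min_le_zero : ∀ l : List ℤ, l.foldr min 0 ≤ 0
  | [] => le_refl 0
  | a :: t => le_trans (min_le_right _ _) (foldr_min_le_zero t)

lemma foldr_min_le_mem {l : List ℤ} {x : ℤ} (h : x ∈ l) : l.foldr min 0 ≤ x := by
  induction l with
  | nil => cases h
  | cons a t ih =>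
    rcases List.mem_cons.1 h with rfl | h
    · exact min_le_left _ _
    · exact le_trans (min_le_right _ _) (ih h)

lemma le_foldr_min {l : List ℤ} {x : ℤ} (h0 : x ≤ 0) (h : ∀ y ∈ l, x ≤ y) :
    x ≤ l.foldr min 0 := by
  induction l with
  | nil => exact h0
  | cons a t ih =>
    exact le_min (h a List.mem_cons_self) (ih fun y hy => h y (List.mem_cons_of_mem _ hy))

lemma foldr_min_cases (l : List ℤ) : l.foldr min 0 = 0 ∨ l.foldr min 0 ∈ l := by
  induction l with
  | nil => exact Or.inl rfl
  | cons a t ih =>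
    rcases le_total a (t.foldr min 0) with h | h
    · exact Or.inr (by simp [min_eq_left h])
    · rcases ih with h' | h'
      · exact Or.inl (by simp only [List.foldr_cons, min_eq_right h]; exact h')
      · exact Or.inr (by simp only [List.foldr_cons, min_eq_right h]; exact List.mem_cons_of_mem _ h')

lemma zero_le_foldr_max : ∀ l : List ℤ, 0 ≤ l.foldr max 0
  | [] => le_refl 0
  | a :: t => le_trans (zero_le_foldr_max t) (le_max_right _ _)

lemma mem_le_foldr_max {l : List ℤ} {x : ℤ} (h : x ∈ l) : x ≤ l.foldr max 0 := by
  induction l with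
  | nil => cases h
  | cons a t ih =>
    rcases List.mem_cons.1 h with rfl | h
    · exact le_max_left _ _
    · exact le_trans (ih h) (le_max_right _ _)

lemma foldr_max_le {l : List ℤ} {x : ℤ} (h0 : 0 ≤ x) (h : ∀ y ∈ l, y ≤ x) :
    l.foldr max 0 ≤ x := by
  induction l with
  | nil => exact h0
  | cons a t ih =>
    exact max_le (h a List.mem_cons_self) (ih fun y hy => h y (List.mem_cons_of_mem _ hy))

lemma foldr_max_cases (l : List ℤ) : l.foldr max 0 = 0 ∨ l.foldr max 0 ∈ l := by
  induction l with
  | nil => exact Or.inl rfl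
  | cons a t ih =>
    rcases le_total a (t.foldr max 0) with h | h
    · rcases ih with h' | h'
      · exact Or.inl (by simp only [List.foldr_cons, max_eq_right h]; exact h')
      · exact Or.inr (by simp only [List.foldr_cons, max_eq_right h]; exact List.mem_cons_of_mem _ h')
    · exact Or.inr (by simp [max_eq_left h])

end FoldrHelpers

section ListHelpers

variable {Q : Type}

lemma tail_take' (l : List Q) (n : ℕ) : (l.take (n+1)).tail = l.tail.take n := by
  induction l <;> simp

lemma take_ne_nil' {l : List Q} {i : ℕ} (h1 : 1 ≤ i) (h : l ≠ []) : l.take i ≠ [] := by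
  have := List.length_pos_iff.2 h
  apply List.ne_nil_of_length_pos
  rw [List.length_take]; omega

lemma drop_ne_nil' {l : List Q} {j : ℕ} (h : j < l.length) : l.drop j ≠ [] := by
  apply List.ne_nil_of_length_pos
  rw [List.length_drop]; omega

lemma getLast?_take' {l : List Q} {i : ℕ} (h1 : 1 ≤ i) (h2 : i ≤ l.length) :
    (l.take i).getLast? = l[i-1]? := by
  rw [List.getLast?_eq_getElem?, List.length_take, List.getElem?_take]
  have hm : min i l.length = i := by omega
  rw [hm, if_pos (by omega)]

lemma getLast?_drop' {l : List Q} {j : ℕ} (h : j < l.length) :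
    (l.drop j).getLast? = l.getLast? := by
  rw [List.getLast?_eq_getElem?, List.getLast?_eq_getElem?, List.length_drop,
    List.getElem?_drop]
  congr 1
  omega

lemma head?_take' {l : List Q} {i : ℕ} (h1 : 1 ≤ i) : (l.take i).head? = l.head? := by
  rw [List.head?_take, if_neg (by omega)]

end ListHelpers


section PathHelpers

variable {Q : Type} (V : VASS Q)

lemma IsPath.ne_nil' {π : List Q} (h : IsPath V π) : π ≠ [] := by
  cases π with
  | nil => exact h.elim
  | cons a t => simp

lemma pathWeight_nil : pathWeight V ([] : List Q) = 0 := rfl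

lemma pathWeight_cons (a b : Q) (l : List Q) :
    pathWeight V (a :: b :: l) = V.w a b + pathWeight V (b :: l) := by
  simp [pathWeight]

lemma pathWeight_short {l : List Q} (h : l.length ≤ 1) : pathWeight V l = 0 := by
  match l, h with
  | [], _ => rfl
  | [a], _ => rfl

/- pmin / smax basic characterizations -/

lemma pmin_le_take (π : List Q) {i : ℕ} (hi : i ≤ π.length) :
    pmin V π ≤ pathWeight V (π.take i) :=
  foldr_min_le_mem (List.mem_map.2 ⟨i, List.mem_range.2 (by omega), rfl⟩)

lemma pmin_le_zero (π : List Q) : pmin V π ≤ 0 := foldr_min_le_zero _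

lemma le_pmin (π : List Q) {x : ℤ} (h0 : x ≤ 0)
    (h : ∀ i ≤ π.length, x ≤ pathWeight V (π.take i)) : x ≤ pmin V π := by
  refine le_foldr_min h0 ?_
  rintro y hy
  obtain ⟨i, hi, rfl⟩ := List.mem_map.1 hy
  exact h i (by have := List.mem_range.1 hi; omega)

lemma pmin_exists (π : List Q) : ∃ i ≤ π.length, pmin V π = pathWeight V (π.take i) := by
  rcases foldr_min_cases (((List.range (π.length + 1)).map
      fun i => pathWeight V (π.take i))) with h | h
  · exact ⟨0, Nat.zero_le _, by simpa [pmin, pathWeight_nil] using h⟩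
  · obtain ⟨i, hi, e⟩ := List.mem_map.1 h
    exact ⟨i, by have := List.mem_range.1 hi; omega, e.symm⟩

lemma smax_ge_drop (π : List Q) {i : ℕ} (hi : i ≤ π.length) :
    pathWeight V (π.drop i) ≤ smax V π :=
  mem_le_foldr_max (List.mem_map.2 ⟨i, List.mem_range.2 (by omega), rfl⟩)

lemma smax_nonneg (π : List Q) : 0 ≤ smax V π := zero_le_foldr_max _

lemma smax_le (π : List Q) {x : ℤ} (h0 : 0 ≤ x)
    (h : ∀ i ≤ π.length, pathWeight V (π.drop i) ≤ x) : smax V π ≤ x := by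
  refine foldr_max_le h0 ?_
  rintro y hy
  obtain ⟨i, hi, rfl⟩ := List.mem_map.1 hy
  exact h i (by have := List.mem_range.1 hi; omega)

lemma smax_exists (π : List Q) : ∃ i ≤ π.length, smax V π = pathWeight V (π.drop i) := by
  rcases foldr_max_cases (((List.range (π.length + 1)).map
      fun i => pathWeight V (π.drop i))) with h | h
  · exact ⟨π.length, le_refl _, by simpa [smax, pathWeight_nil] using h⟩
  · obtain ⟨i, hi, e⟩ := List.mem_map.1 h
    exact ⟨i, by have := List.mem_range.1 hi; omega, e.symm⟩

lemma pathWeight_le_smax (π : List Q) : pathWeight V π ≤ smax V π := by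
  have := smax_ge_drop V π (i := 0) (Nat.zero_le _)
  simpa using this

lemma pmin_le_pathWeight (π : List Q) : pmin V π ≤ pathWeight V π := by
  have := pmin_le_take V π (i := π.length) le_rfl
  simpa using this

/- pathConcat basics -/

lemma length_pathConcat {β : List Q} (α : List Q) (hβ : β ≠ []) :
    (pathConcat α β).length = α.length + β.length - 1 := by
  cases β with
  | nil => exact absurd rfl hβ
  | cons b t => simp [pathConcat]

lemma head?_pathConcat {α : List Q} (β : List Q) (hα : α ≠ []) :
    (pathConcat α β).head? = α.head? := by
  cases α with
  | nil => exact absurd rfl hα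
  | cons a t => simp [pathConcat]

lemma getLast?_pathConcat {α β : List Q} (hα : α ≠ [])
    (hl : α.getLast? = β.head?) : (pathConcat α β).getLast? = β.getLast? := by
  cases β with
  | nil =>
    simp only [List.head?_nil] at hl
    have := (List.getLast?_isSome (l := α)).2 hα
    rw [hl] at this
    simp at this
  | cons b t =>
    cases t with
    | nil =>
      show (α ++ []).getLast? = _
      simp only [List.append_nil]
      rw [hl]
      rfl
    | cons c t' =>
      show (α ++ (c :: t')).getLast? = _
      rw [List.getLast?_cons_cons, List.getLast?_append]
      have := (List.getLast?_isSome (l := c :: t')).2 (by simp)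
      obtain ⟨x, hx⟩ := Option.isSome_iff_exists.1 this
      rw [hx]
      rfl

lemma isPath_pathConcat {α β : List Q} (hα : IsPath V α) (hβ : IsPath V β)
    (hl : α.getLast? = β.head?) : IsPath V (pathConcat α β) := by
  induction α with
  | nil => exact hα.elim
  | cons a t ih =>
    cases t with
    | nil =>
      have hβne := hβ.ne_nil' V
      cases β with
      | nil => exact absurd rfl hβne
      | cons b u =>
        simp only [List.getLast?_singleton, List.head?_cons, Option.some.injEq] at hl
        subst hl
        show IsPath V ([a] ++ u)
        simpa using hβ
    | cons b t' =>
      have h2 := ih hα.2 (by rw [← hl]; exact (List.getLast?_cons_cons).symm)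
      exact ⟨hα.1, h2⟩

lemma pathWeight_pathConcat {α β : List Q} (hα : α ≠ []) (hβ : β ≠ [])
    (hl : α.getLast? = β.head?) :
    pathWeight V (pathConcat α β) = pathWeight V α + pathWeight V β := by
  induction α with
  | nil => exact absurd rfl hα
  | cons a t ih =>
    cases t with
    | nil =>
      cases β with
      | nil => exact absurd rfl hβ
      | cons b u =>
        simp only [List.getLast?_singleton, List.head?_cons, Option.some.injEq] at hl
        subst hl
        show pathWeight V ([a] ++ u) = pathWeight V [a] + pathWeight V (a :: u)
        simp [pathWeight_short V (l := [a]) (by simp)]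
    | cons b t' =>
      have h2 := ih (by simp) (by rw [← hl]; exact (List.getLast?_cons_cons).symm)
      show pathWeight V (a :: b :: (t' ++ β.tail)) = _
      rw [pathWeight_cons, pathWeight_cons]
      have : pathConcat (b :: t') β = b :: (t' ++ β.tail) := rfl
      rw [this] at h2
      rw [h2]
      ring

/- splitting a path -/

lemma split_eq (π : List Q) {i : ℕ} (h1 : 1 ≤ i) :
    pathConcat (π.take i) (π.drop (i-1)) = π := by
  show π.take i ++ (π.drop (i-1)).tail = π
  rw [List.tail_drop]
  have : i - 1 + 1 = i := by omega
  rw [this, List.take_append_drop]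

lemma take_drop_connect (π : List Q) {i : ℕ} (h1 : 1 ≤ i) (h2 : i ≤ π.length) :
    (π.take i).getLast? = (π.drop (i-1)).head? := by
  rw [getLast?_take' h1 h2, List.head?_drop]

lemma pathWeight_split (π : List Q) {i : ℕ} (hπ : π ≠ []) (h1 : 1 ≤ i) (h2 : i ≤ π.length) :
    pathWeight V π = pathWeight V (π.take i) + pathWeight V (π.drop (i-1)) := by
  conv_lhs => rw [← split_eq π h1]
  exact pathWeight_pathConcat V (take_ne_nil' h1 hπ) (drop_ne_nil' (by omega))
    (take_drop_connect π h1 h2)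

lemma isPath_take {π : List Q} (h : IsPath V π) (i : ℕ) : IsPath V (π.take (i+1)) := by
  induction π generalizing i with
  | nil => exact h.elim
  | cons a t ih =>
    cases t with
    | nil => simp [IsPath]
    | cons b t' =>
      cases i with
      | zero => simp [IsPath]
      | succ j =>
        show IsPath V (a :: b :: (t'.take j))
        exact ⟨h.1, ih h.2 j⟩

lemma isPath_drop {π : List Q} (h : IsPath V π) {i : ℕ} (hi : i < π.length) :
    IsPath V (π.drop i) := by
  induction π generalizing i with
  | nil => exact h.elim
  | cons a t ih =>
    cases i with
    | zero => simpa using h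
    | succ j =>
      cases t with
      | nil => simp at hi
      | cons b t' =>
        exact ih h.2 (by simpa using Nat.lt_of_succ_lt_succ hi)

/- take and drop of a pathConcat -/

lemma take_pathConcat_left {α : List Q} (β : List Q) {j : ℕ} (hj : j ≤ α.length) :
    (pathConcat α β).take j = α.take j := by
  show (α ++ β.tail).take j = α.take j
  rw [List.take_append]
  have : j - α.length = 0 := by omega
  simp [this]

lemma take_pathConcat_right (α β : List Q) {j : ℕ} (hj : α.length ≤ j) :
    (pathConcat α β).take j = pathConcat α (β.take (j - α.length + 1)) := by
  show (α ++ β.tail).take j = α ++ (β.take (j - α.length + 1)).tail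
  rw [List.take_append, List.take_of_length_le hj]
  congr 1
  rw [tail_take']

lemma drop_pathConcat_left (α β : List Q) {j : ℕ} (hj : j ≤ α.length) :
    (pathConcat α β).drop j = pathConcat (α.drop j) β := by
  show (α ++ β.tail).drop j = α.drop j ++ β.tail
  rw [List.drop_append]
  have : j - α.length = 0 := by omega
  simp [this]

lemma drop_pathConcat_right (α β : List Q) {j : ℕ} (hj : α.length ≤ j) :
    (pathConcat α β).drop j = β.drop (j - α.length + 1) := by
  show (α ++ β.tail).drop j = _
  rw [List.drop_append, List.drop_eq_nil_of_le hj, List.nil_append,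
    ← List.drop_one, List.drop_drop]
  congr 1
  omega

/- pmin and smax of a concatenation -/

lemma pmin_pathConcat {α β : List Q} (V : VASS Q) (hα : α ≠ []) (hβ : β ≠ [])
    (hl : α.getLast? = β.head?) :
    pmin V (pathConcat α β) = min (pmin V α) (pathWeight V α + pmin V β) := by
  have hα1 : 1 ≤ α.length := List.length_pos_iff.2 hα
  have hβ1 : 1 ≤ β.length := List.length_pos_iff.2 hβ
  have hlen : (pathConcat α β).length = α.length + β.length - 1 := length_pathConcat α hβ
  apply le_antisymm
  · refine le_min ?_ ?_
    · obtain ⟨i, hi, he⟩ := pmin_exists V α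
      rw [he, ← take_pathConcat_left β hi]
      exact pmin_le_take V _ (by omega)
    · obtain ⟨i, hi, he⟩ := pmin_exists V β
      rw [he]
      by_cases h1 : i ≤ 1
      · have h0 : pathWeight V (β.take i) = 0 :=
          pathWeight_short V (by rw [List.length_take]; omega)
        rw [h0, add_zero]
        have hA : (pathConcat α β).take α.length = α := by
          rw [take_pathConcat_left β le_rfl, List.take_length]
        have := pmin_le_take V (pathConcat α β) (i := α.length) (by omega)
        rwa [hA] at this
      · push_neg at h1
        have hj : (pathConcat α β).take (α.length + i - 1) = pathConcat α (β.take i) := by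
          rw [take_pathConcat_right α β (by omega)]
          congr 2
          omega
        have htne : β.take i ≠ [] := take_ne_nil' (by omega) hβ
        have hcon : α.getLast? = (β.take i).head? := by
          rw [head?_take' (by omega)]; exact hl
        have hw : pathWeight V (pathConcat α (β.take i)) =
            pathWeight V α + pathWeight V (β.take i) :=
          pathWeight_pathConcat V hα htne hcon
        have := pmin_le_take V (pathConcat α β) (i := α.length + i - 1) (by omega)
        rw [hj, hw] at this
        exact this
  · refine le_pmin V _ (le_trans (min_le_left _ _) (pmin_le_zero V α)) ?_
    intro j hjle
    by_cases hc : j ≤ α.length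
    · rw [take_pathConcat_left β hc]
      exact le_trans (min_le_left _ _) (pmin_le_take V α hc)
    · push_neg at hc
      rw [take_pathConcat_right α β (le_of_lt hc)]
      have htne : β.take (j - α.length + 1) ≠ [] := take_ne_nil' (by omega) hβ
      have hcon : α.getLast? = (β.take (j - α.length + 1)).head? := by
        rw [head?_take' (by omega)]; exact hl
      rw [pathWeight_pathConcat V hα htne hcon]
      have h2 : pmin V β ≤ pathWeight V (β.take (j - α.length + 1)) :=
        pmin_le_take V β (by omega)
      exact le_trans (min_le_right _ _) (by linarith)

lemma smax_pathConcat {α β : List Q} (V : VASS Q) (hα : α ≠ []) (hβ : β ≠ [])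
    (hl : α.getLast? = β.head?) :
    smax V (pathConcat α β) = max (smax V β) (pathWeight V β + smax V α) := by
  have hα1 : 1 ≤ α.length := List.length_pos_iff.2 hα
  have hβ1 : 1 ≤ β.length := List.length_pos_iff.2 hβ
  have hlen : (pathConcat α β).length = α.length + β.length - 1 := length_pathConcat α hβ
  have wbase : pathWeight V β ≤ smax V (pathConcat α β) := by
    -- the suffix starting at the last vertex of α is β (up to weight)
    have hd : (pathConcat α β).drop (α.length - 1) =
        pathConcat (α.drop (α.length - 1)) β := drop_pathConcat_left α β (by omega)
    have hne : α.drop (α.length - 1) ≠ [] := drop_ne_nil' (by omega)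
    have hcon : (α.drop (α.length - 1)).getLast? = β.head? := by
      rw [getLast?_drop' (by omega)]; exact hl
    have h0 : pathWeight V (α.drop (α.length - 1)) = 0 :=
      pathWeight_short V (by rw [List.length_drop]; omega)
    have hw : pathWeight V (pathConcat (α.drop (α.length - 1)) β) = pathWeight V β := by
      rw [pathWeight_pathConcat V hne hβ hcon, h0, zero_add]
    have := smax_ge_drop V (pathConcat α β) (i := α.length - 1) (by omega)
    rwa [hd, hw] at this
  apply le_antisymm
  · refine smax_le V _ (le_trans (smax_nonneg V β) (le_max_left _ _)) ?_
    intro j hjle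
    by_cases hc : j < α.length
    · rw [drop_pathConcat_left α β (le_of_lt hc)]
      have hne : α.drop j ≠ [] := drop_ne_nil' hc
      have hcon : (α.drop j).getLast? = β.head? := by
        rw [getLast?_drop' hc]; exact hl
      rw [pathWeight_pathConcat V hne hβ hcon]
      have h2 : pathWeight V (α.drop j) ≤ smax V α := smax_ge_drop V α (le_of_lt hc)
      exact le_trans (by linarith) (le_max_right _ _)
    · push_neg at hc
      rw [drop_pathConcat_right α β hc]
      have h2 : pathWeight V (β.drop (j - α.length + 1)) ≤ smax V β :=
        smax_ge_drop V β (by omega)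
      exact le_trans h2 (le_max_left _ _)
  · refine max_le ?_ ?_
    · obtain ⟨i, hi, he⟩ := smax_exists V β
      rw [he]
      rcases Nat.eq_zero_or_pos i with rfl | hip
      · simpa using wbase
      · have hd : (pathConcat α β).drop (α.length + i - 1) = β.drop i := by
          rw [drop_pathConcat_right α β (by omega)]
          congr 1
          omega
        have := smax_ge_drop V (pathConcat α β) (i := α.length + i - 1) (by omega)
        rwa [hd] at this
    · obtain ⟨i, hi, he⟩ := smax_exists V α
      rw [he]
      rcases Nat.lt_or_ge i α.length with hip | hip
      · have hd : (pathConcat α β).drop i = pathConcat (α.drop i) β :=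
          drop_pathConcat_left α β (le_of_lt hip)
        have hne : α.drop i ≠ [] := drop_ne_nil' hip
        have hcon : (α.drop i).getLast? = β.head? := by
          rw [getLast?_drop' hip]; exact hl
        have hw : pathWeight V (pathConcat (α.drop i) β) =
            pathWeight V (α.drop i) + pathWeight V β :=
          pathWeight_pathConcat V hne hβ hcon
        have := smax_ge_drop V (pathConcat α β) (i := i) (by omega)
        rw [hd, hw] at this
        linarith
      · have : i = α.length := by omega
        subst this
        rw [List.drop_length, pathWeight_nil, add_zero]
        exact wbase

lemma smax_eq_zero_of_pmin_eq {α : List Q} (V : VASS Q) (hα : α ≠ [])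
    (h : pmin V α = pathWeight V α) : smax V α = 0 := by
  refine le_antisymm ?_ (smax_nonneg V α)
  refine smax_le V _ le_rfl ?_
  intro j hj
  rcases Nat.lt_or_ge j α.length with hjl | hjg
  · have hsplit := pathWeight_split V α hα (i := j + 1) (by omega) (by omega)
    have h2 : pmin V α ≤ pathWeight V (α.take (j+1)) := pmin_le_take V α (by omega)
    have : α.drop (j + 1 - 1) = α.drop j := by norm_num
    rw [this] at hsplit
    linarith
  · have : j = α.length := by omega
    subst this
    rw [List.drop_length, pathWeight_nil]

end PathHelpers



/-- Proposition 12: every set of `p`-`q` paths of length at most `k` has a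
Pareto set of at most `|Q|` paths from `p` to `q`, each of length at most `2k`. -/
theorem pareto_set_small
    {Q : Type} [Fintype Q] (V : VASS Q) (p q : Q) (k : ℕ) (P : Set (List Q))
    (hP : ∀ π ∈ P, IsPQPath V p q π ∧ π.length ≤ k + 1) :
    ∃ P' : Set (List Q),
      ParetoFor V P' P ∧
      (∀ π ∈ P', IsPQPath V p q π ∧ π.length ≤ 2 * k + 1) ∧
      P'.Finite ∧ P'.ncard ≤ Fintype.card Q := by
  classical
  -- normalized first pieces ending at `s` and second pieces starting at `s`
  set A : Q → Set (List Q) := fun s =>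
    {α | IsPath V α ∧ α.head? = some p ∧ α.getLast? = some s ∧ α.length ≤ k + 1 ∧
      pmin V α = pathWeight V α} with hA
  set B : Q → Set (List Q) := fun s =>
    {β | IsPath V β ∧ β.head? = some s ∧ β.getLast? = some q ∧ β.length ≤ k + 1 ∧
      pmin V β = 0} with hB
  have hAfin : ∀ s, (A s).Finite := fun s =>
    (List.finite_length_le Q (k + 1)).subset fun α hα => hα.2.2.2.1
  have hBfin : ∀ s, (B s).Finite := fun s =>
    (List.finite_length_le Q (k + 1)).subset fun β hβ => hβ.2.2.2.1
  -- for each usable state, a single dominating concatenated path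
  have key : ∀ s : Q, (A s).Nonempty → (B s).Nonempty →
      ∃ γ : List Q, (IsPQPath V p q γ ∧ γ.length ≤ 2 * k + 1) ∧
        (∀ α ∈ A s, pathWeight V α ≤ pmin V γ) ∧
        (∀ β ∈ B s, smax V β ≤ smax V γ) := by
    intro s hAne hBne
    obtain ⟨α, hαA, hαmax⟩ := Set.exists_max_image (A s) (pathWeight V) (hAfin s) hAne
    obtain ⟨β, hβB, hβmax⟩ := Set.exists_max_image (B s) (smax V) (hBfin s) hBne
    obtain ⟨hαP, hαh, hαl, hαk, hαm⟩ := hαA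
    obtain ⟨hβP, hβh, hβl, hβk, hβm⟩ := hβB
    have hαne : α ≠ [] := hαP.ne_nil' V
    have hβne : β ≠ [] := hβP.ne_nil' V
    have hβ1 : 1 ≤ β.length := List.length_pos_iff.2 hβne
    have hlast : α.getLast? = β.head? := by rw [hαl, hβh]
    refine ⟨pathConcat α β, ⟨⟨isPath_pathConcat V hαP hβP hlast,
      by rw [head?_pathConcat β hαne, hαh],
      by rw [getLast?_pathConcat hαne hlast, hβl]⟩,
      by rw [length_pathConcat α hβne]; omega⟩, ?_, ?_⟩
    · intro α' hα'
      have hp : pmin V (pathConcat α β) = pathWeight V α := by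
        rw [pmin_pathConcat V hαne hβne hlast, hαm, hβm, add_zero, min_self]
      rw [hp]
      exact hαmax α' hα'
    · intro β' hβ'
      have hsα : smax V α = 0 := smax_eq_zero_of_pmin_eq V hαne hαm
      have hs : smax V (pathConcat α β) = smax V β := by
        rw [smax_pathConcat V hαne hβne hlast, hsα, add_zero,
          max_eq_left (pathWeight_le_smax V β)]
      rw [hs]
      exact hβmax β' hβ'
  -- skolemize
  have key' : ∀ s : Q, ∃ γ : List Q, (A s).Nonempty → (B s).Nonempty →
      ((IsPQPath V p q γ ∧ γ.length ≤ 2 * k + 1) ∧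
        (∀ α ∈ A s, pathWeight V α ≤ pmin V γ) ∧
        (∀ β ∈ B s, smax V β ≤ smax V γ)) := by
    intro s
    by_cases h : (A s).Nonempty ∧ (B s).Nonempty
    · obtain ⟨γ, hγ⟩ := key s h.1 h.2
      exact ⟨γ, fun _ _ => hγ⟩
    · exact ⟨[p], fun h1 h2 => absurd ⟨h1, h2⟩ h⟩
  choose g hg using key'
  set D : Set Q := {s | (A s).Nonempty ∧ (B s).Nonempty} with hD
  refine ⟨g '' D, ?_, ?_, (D.toFinite).image g, ?_⟩
  · -- ParetoFor
    intro π hπ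
    obtain ⟨⟨hπP, hπh, hπl⟩, hπk⟩ := hP π hπ
    have hπne : π ≠ [] := hπP.ne_nil' V
    have hlen1 : 1 ≤ π.length := List.length_pos_iff.2 hπne
    -- a split position realizing the prefix minimum
    obtain ⟨i, hi1, hile, hie⟩ : ∃ i, 1 ≤ i ∧ i ≤ π.length ∧
        pathWeight V (π.take i) = pmin V π := by
      obtain ⟨i0, hi0, he0⟩ := pmin_exists V π
      rcases Nat.eq_zero_or_pos i0 with rfl | hp0
      · refine ⟨1, le_rfl, hlen1, ?_⟩
        rw [pathWeight_short V (by rw [List.length_take]; omega), he0]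
        simp [pathWeight_nil]
      · exact ⟨i0, hp0, hi0, he0.symm⟩
    set α : List Q := π.take i with hαdef
    set β : List Q := π.drop (i - 1) with hβdef
    have hsplit : pathConcat α β = π := split_eq π hi1
    have hαne : α ≠ [] := take_ne_nil' hi1 hπne
    have hβne : β ≠ [] := drop_ne_nil' (by omega)
    have hconn : α.getLast? = β.head? := take_drop_connect π hi1 hile
    obtain ⟨s, hs⟩ := Option.isSome_iff_exists.1 ((List.getLast?_isSome (l := α)).2 hαne)
    have hpπ : pmin V π = min (pmin V α) (pathWeight V α + pmin V β) := by
      rw [← hsplit]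
      exact pmin_pathConcat V hαne hβne hconn
    have hpαle : pmin V α ≤ pathWeight V α := pmin_le_pathWeight V α
    have h1 : pmin V α = pathWeight V α := by
      have hge : pathWeight V α ≤ pmin V α := by
        rw [hie, hpπ]
        exact min_le_left _ _
      exact le_antisymm hpαle hge
    have h2 : pmin V β = 0 := by
      have hle0 : pmin V β ≤ 0 := pmin_le_zero V β
      have hmr : pmin V π ≤ pathWeight V α + pmin V β := by
        rw [hpπ]; exact min_le_right _ _
      rw [← hie] at hmr
      omega
    have hαA : α ∈ A s := by
      refine ⟨?_, ?_, hs, ?_, h1⟩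
      · have hi' : i - 1 + 1 = i := by omega
        have := isPath_take V hπP (i - 1)
        rwa [hi'] at this
      · rw [hαdef, head?_take' hi1, hπh]
      · rw [hαdef, List.length_take]; omega
    have hβB : β ∈ B s := by
      refine ⟨isPath_drop V hπP (by omega), ?_, ?_, ?_, h2⟩
      · rw [← hconn, hs]
      · rw [hβdef, getLast?_drop' (by omega), hπl]
      · rw [hβdef, List.length_drop]; omega
    have hsD : s ∈ D := ⟨⟨α, hαA⟩, ⟨β, hβB⟩⟩
    obtain ⟨⟨hgPQ, hgk⟩, hgpmin, hgsmax⟩ := hg s hsD.1 hsD.2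
    refine ⟨g s, Set.mem_image_of_mem g hsD, ?_, ?_, ?_, ?_⟩
    · rw [hπh, hgPQ.2.1]
    · rw [hπl, hgPQ.2.2]
    · rw [← hie]
      exact hgpmin α hαA
    · have hsπ : smax V π = smax V β := by
        rw [← hsplit, smax_pathConcat V hαne hβne hconn,
          smax_eq_zero_of_pmin_eq V hαne h1, add_zero,
          max_eq_left (pathWeight_le_smax V β)]
      rw [hsπ]
      exact hgsmax β hβB
  · -- properties of the members of P'
    rintro γ ⟨s, hsD, rfl⟩
    exact (hg s hsD.1 hsD.2).1
  · -- cardinality bound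
    calc (g '' D).ncard ≤ D.ncard := Set.ncard_image_le D.toFinite
      _ ≤ (Set.univ : Set Q).ncard := Set.ncard_le_ncard (Set.subset_univ D) Set.finite_univ
      _ = Fintype.card Q := by rw [Set.ncard_univ, Nat.card_eq_fintype_card]


end VASSPaper
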